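/- For every real number r, the series Σ_{k=0}^∞ C(2k, k) · (tanh(r)² / 4)^k converges and its sum equals cosh(r), where C(2k, k) = (2k)!/(k!)² is the central binomial coefficient. Consequently, the squeezed-vacuum coefficient sequence ψ_{r,φ} is a unit vector in ℓ²(ℕ, ℂ): Σ_{n=0}^∞ |ψ_{r,φ}(n)|² = 1. -/

import Mathlib

open Finset

/-- The squeezed-vacuum coefficient sequence: `ψ c φ (2k) =
(cosh c)^(-1/2) · (√((2k)!)/(2^k k!)) · (-e^{iφ} tanh c)^k`, and `ψ c φ n = 0` for odd `n`. -/
noncomputable def sqVac (c φ : ℝ) : ℕ → ℂ := fun n =>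
  if Even n then
    ((Real.sqrt (Real.cosh c))⁻¹ : ℂ) *
      ((Real.sqrt (Nat.factorial n) / (2 ^ (n / 2) * Nat.factorial (n / 2)) : ℝ) : ℂ) *
      (-(Complex.exp (φ * Complex.I)) * (Real.tanh c : ℂ)) ^ (n / 2)
  else 0

lemma descPoch_step (r : ℚ) (k : ℕ) :
    (descPochhammer ℤ (k+1)).smeval r = (descPochhammer ℤ k).smeval r * (r - k) := by
  rw [descPochhammer_succ_right]
  simp [Polynomial.smeval_mul, Polynomial.smeval_sub, Polynomial.smeval_natCast]

lemma descPoch_neg_half (k : ℕ) :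
    (descPochhammer ℤ k).smeval ((-1:ℚ)/2) =
      ((-1)/4) ^ k * Nat.centralBinom k * Nat.factorial k := by
  induction k with
  | zero => simp
  | succ k ih =>
    rw [descPoch_step, ih]
    have h' : ((k:ℚ)+1) * (Nat.centralBinom (k+1)) = 2 * (2*k+1) * Nat.centralBinom k := by
      exact_mod_cast congrArg (Nat.cast : ℕ → ℚ) (Nat.succ_mul_centralBinom_succ k)
    push_cast [Nat.factorial_succ, pow_succ]
    linear_combination ((1:ℚ)/4) * ((-1:ℚ)/4)^k * (Nat.factorial k) * h'

lemma descPoch_neg_one (k : ℕ) :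
    (descPochhammer ℤ k).smeval ((-1:ℚ)) = (-1) ^ k * Nat.factorial k := by
  induction k with
  | zero => simp
  | succ k ih =>
    rw [descPoch_step, ih]
    push_cast [Nat.factorial_succ]
    ring

lemma ring_choose_neg_half (k : ℕ) :
    Ring.choose ((-1:ℚ)/2) k = ((-1)/4) ^ k * Nat.centralBinom k := by
  have h := (Ring.descPochhammer_eq_factorial_smul_choose ((-1:ℚ)/2) k).symm
  rw [descPoch_neg_half, nsmul_eq_mul] at h
  have hk : (Nat.factorial k : ℚ) ≠ 0 := by exact_mod_cast (Nat.factorial_ne_zero k)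
  refine mul_left_cancel₀ hk ?_
  rw [h]; ring

lemma ring_choose_neg_one (k : ℕ) :
    Ring.choose ((-1:ℚ)) k = (-1) ^ k := by
  have h := (Ring.descPochhammer_eq_factorial_smul_choose ((-1:ℚ)) k).symm
  rw [descPoch_neg_one, nsmul_eq_mul] at h
  have hk : (Nat.factorial k : ℚ) ≠ 0 := by exact_mod_cast (Nat.factorial_ne_zero k)
  refine mul_left_cancel₀ hk ?_
  rw [h]; ring

lemma centralBinom_conv (k : ℕ) :
    ∑ ij ∈ antidiagonal k, (Nat.centralBinom ij.1 : ℚ) * Nat.centralBinom ij.2 = 4 ^ k := by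
  have h := Ring.add_choose_eq (r := (-1:ℚ)/2) (s := (-1:ℚ)/2) k (Commute.all _ _)
  have heq : ((-1:ℚ)/2) + ((-1:ℚ)/2) = -1 := by norm_num
  rw [heq, ring_choose_neg_one] at h
  simp only [ring_choose_neg_half] at h
  have h2 : ((-1:ℚ)/4)^k * (∑ ij ∈ antidiagonal k,
      (Nat.centralBinom ij.1 : ℚ) * Nat.centralBinom ij.2) = (-1)^k := by
    rw [Finset.mul_sum, h]
    apply Finset.sum_congr rfl
    intro ij hij
    obtain rfl : ij.1 + ij.2 = k := Finset.HasAntidiagonal.mem_antidiagonal.mp hij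
    rw [pow_add]; ring
  have hne : ((-1:ℚ)/4)^k ≠ 0 := by
    apply pow_ne_zero; norm_num
  refine mul_left_cancel₀ hne ?_
  rw [h2, ← mul_pow]; norm_num

lemma centralBinom_le_four_pow (k : ℕ) : Nat.centralBinom k ≤ 4 ^ k := by
  rw [Nat.centralBinom_eq_two_mul_choose]
  exact le_trans (Nat.choose_le_choose k (by omega)) (Nat.choose_middle_le_pow k)

lemma centralBinom_hasSum_cosh (r : ℝ) :
    HasSum (fun k : ℕ => (Nat.centralBinom k : ℝ) * (Real.tanh r ^ 2 / 4) ^ k)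
      (Real.cosh r) := by
  have hconv : ∀ k : ℕ, ∑ ij ∈ antidiagonal k,
      (Nat.centralBinom ij.1 : ℝ) * Nat.centralBinom ij.2 = 4 ^ k := by
    intro k
    exact_mod_cast congrArg (Rat.cast : ℚ → ℝ) (centralBinom_conv k)
  set t := Real.tanh r with ht
  set f : ℕ → ℝ := fun k => (Nat.centralBinom k : ℝ) * (t ^ 2 / 4) ^ k with hf
  have hc := Real.cosh_pos r
  have hid := Real.cosh_sq_sub_sinh_sq r
  have h1t : 1 - t ^ 2 = (Real.cosh r ^ 2)⁻¹ := by
    rw [ht, Real.tanh_eq_sinh_div_cosh]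
    field_simp
    exact hid
  have ht2 : t ^ 2 < 1 := by nlinarith [inv_pos.mpr (pow_pos hc 2)]
  have hle : ∀ k, f k ≤ (t ^ 2) ^ k := by
    intro k
    have h4 : (Nat.centralBinom k : ℝ) ≤ 4 ^ k := by
      exact_mod_cast centralBinom_le_four_pow k
    calc f k ≤ (4:ℝ) ^ k * (t ^ 2 / 4) ^ k := by
          apply mul_le_mul_of_nonneg_right h4 (by positivity)
      _ = (t ^ 2) ^ k := by rw [← mul_pow]; ring_nf
  have hgeo : Summable fun k : ℕ => (t ^ 2) ^ k :=
    summable_geometric_of_lt_one (sq_nonneg t) ht2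
  have hsumf : Summable f := Summable.of_nonneg_of_le (fun k => by positivity) hle hgeo
  have hnorm : Summable fun k => ‖f k‖ := by
    have : ∀ k, ‖f k‖ = f k := fun k => Real.norm_of_nonneg (by positivity)
    simpa [this] using hsumf
  have hcauchy := tsum_mul_tsum_eq_tsum_sum_antidiagonal_of_summable_norm hnorm hnorm
  have hdiag : ∀ k : ℕ, ∑ ij ∈ antidiagonal k, f ij.1 * f ij.2 = (t ^ 2) ^ k := by
    intro k
    have : ∀ ij ∈ antidiagonal k, f ij.1 * f ij.2 =
        ((Nat.centralBinom ij.1 : ℝ) * Nat.centralBinom ij.2) * (t ^ 2 / 4) ^ k := by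
      intro ij hij
      obtain rfl : ij.1 + ij.2 = k := Finset.HasAntidiagonal.mem_antidiagonal.mp hij
      simp only [hf, pow_add]; ring
    rw [Finset.sum_congr rfl this, ← Finset.sum_mul, hconv k, ← mul_pow]
    ring_nf
  have hS2 : (∑' k, f k) * (∑' k, f k) = Real.cosh r * Real.cosh r := by
    rw [hcauchy]
    simp_rw [hdiag]
    rw [tsum_geometric_of_lt_one (sq_nonneg t) ht2, h1t, inv_inv]
    ring
  have hS0 : 0 ≤ ∑' k, f k := tsum_nonneg (fun k => by positivity)
  have : ∑' k, f k = Real.cosh r := by nlinarith [hS2, hS0, hc]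
  exact hsumf.hasSum_iff.mpr this

lemma sqVac_abs_sq_even (r φ : ℝ) (k : ℕ) :
    ‖sqVac r φ (2 * k)‖ ^ 2 =
      (Real.cosh r)⁻¹ * ((Nat.centralBinom k : ℝ) * (Real.tanh r ^ 2 / 4) ^ k) := by
  have hc := Real.cosh_pos r
  have heven : Even (2 * k) := even_two_mul k
  have hdiv : 2 * k / 2 = k := Nat.mul_div_cancel_left k (by norm_num)
  rw [sqVac, if_pos heven, hdiv]
  rw [norm_mul, norm_mul, norm_pow, norm_mul, norm_inv]
  rw [Complex.norm_real, Complex.norm_real, Complex.norm_real, Real.norm_eq_abs, Real.norm_eq_abs, Real.norm_eq_abs]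
  rw [norm_neg, Complex.norm_exp_ofReal_mul_I]
  have hfac : (Nat.centralBinom k : ℝ) * (Nat.factorial k * Nat.factorial k)
      = Nat.factorial (2 * k) := by
    have := Nat.choose_mul_factorial_mul_factorial (show k ≤ 2 * k by omega)
    rw [Nat.centralBinom_eq_two_mul_choose]
    have h2 : 2 * k - k = k := by omega
    rw [h2] at this
    push_cast [← this]; ring
  have hs1 : |Real.sqrt (Real.cosh r)| = Real.sqrt (Real.cosh r) :=
    abs_of_nonneg (Real.sqrt_nonneg _)
  have hs2 : |(Real.sqrt (Nat.factorial (2 * k)) / (2 ^ k * Nat.factorial k) : ℝ)|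
      = Real.sqrt (Nat.factorial (2 * k)) / (2 ^ k * Nat.factorial k) :=
    abs_of_nonneg (by positivity)
  rw [hs1, hs2]
  have e1 : Real.sqrt (Real.cosh r) ^ 2 = Real.cosh r := Real.sq_sqrt hc.le
  have e2 : Real.sqrt (Nat.factorial (2 * k)) ^ 2 = (Nat.factorial (2 * k) : ℝ) :=
    Real.sq_sqrt (by positivity)
  have hfk : (0:ℝ) < Nat.factorial k := by positivity
  rw [mul_pow, mul_pow, inv_pow, div_pow, one_mul, mul_pow, e1, e2]
  have e3 : (|Real.tanh r| ^ k) ^ 2 = (Real.tanh r ^ 2) ^ k := by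
    rw [← pow_mul, mul_comm, pow_mul, sq_abs]
  have e4 : ((2:ℝ)^k)^2 = 4^k := by rw [← pow_mul, mul_comm, pow_mul]; norm_num
  rw [e3, e4, ← hfac]
  field_simp
  ring_nf
  rw [mul_assoc, ← mul_pow]; norm_num

/-- The series `∑ C(2k,k) (tanh² r / 4)^k` converges to `cosh r`; consequently the
squeezed-vacuum coefficient sequence is a unit vector in `ℓ²(ℕ, ℂ)`. -/
theorem sqVac_norm_one (r : ℝ) (φ : ℝ) :
    HasSum (fun k : ℕ => (Nat.centralBinom k : ℝ) * (Real.tanh r ^ 2 / 4) ^ k)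
      (Real.cosh r) ∧
    HasSum (fun n : ℕ => ‖sqVac r φ n‖ ^ 2) 1 := by
  have h1 := centralBinom_hasSum_cosh r
  refine ⟨h1, ?_⟩
  have hc := Real.cosh_pos r
  set g : ℕ → ℝ := fun k =>
    (Real.cosh r)⁻¹ * ((Nat.centralBinom k : ℝ) * (Real.tanh r ^ 2 / 4) ^ k) with hg
  have hgsum : HasSum g 1 := by
    have := h1.mul_left (Real.cosh r)⁻¹
    rwa [inv_mul_cancel₀ hc.ne'] at this
  set F : ℕ → ℝ := fun n => ‖sqVac r φ n‖ ^ 2 with hF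
  have hFg : ∀ k, F (2 * k) = g k := fun k => sqVac_abs_sq_even r φ k
  refine (hasSum_iff_hasSum_of_ne_zero_bij
    (i := fun x : Function.support g => 2 * (x : ℕ)) ?_ ?_ ?_).mpr hgsum
  · intro a b hab
    have : 2 * (a : ℕ) = 2 * (b : ℕ) := hab
    exact Subtype.ext (by omega)
  · intro n hn
    have hne : F n ≠ 0 := hn
    have heven : Even n := by
      by_contra hodd
      have : sqVac r φ n = 0 := by rw [sqVac, if_neg hodd]
      simp [hF, this] at hne
    obtain ⟨k, hk⟩ := heven
    have hk2 : n = 2 * k := by omega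
    have hgk : g k ≠ 0 := by rw [← hFg k, ← hk2]; exact hne
    exact ⟨⟨k, hgk⟩, hk2.symm⟩
  · intro x
    exact hFg x
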